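/- Let X be an uncountable set and H a group that is not solvable. Then every subgroup of countable index in the direct sum ⊕_{x∈X} H is not solvable. In particular, ⊕_{x∈X} H is not solvable-by-countable: it has no solvable subgroup of countable index. -/

import Mathlib

open Function

section Aux

variable {G : Type*} [Group G]

lemma map_mono_closure {S T : Finset G} (hST : S ⊆ T) (n : ℕ) :
    (derivedSeries ↥(Subgroup.closure (S : Set G)) n).map (Subgroup.closure (S : Set G)).subtype ≤
      (derivedSeries ↥(Subgroup.closure (T : Set G)) n).map (Subgroup.closure (T : Set G)).subtype := by
  have h : Subgroup.closure (S : Set G) ≤ Subgroup.closure (T : Set G) :=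
    Subgroup.closure_mono (by exact_mod_cast hST)
  have hm := map_derivedSeries_le_derivedSeries (Subgroup.inclusion h) n
  have heq : (derivedSeries ↥(Subgroup.closure (S : Set G)) n).map (Subgroup.closure (S : Set G)).subtype
      = ((derivedSeries ↥(Subgroup.closure (S : Set G)) n).map (Subgroup.inclusion h)).map
          (Subgroup.closure (T : Set G)).subtype := by
    rw [Subgroup.map_map, Subgroup.subtype_comp_inclusion]
  rw [heq]
  exact Subgroup.map_mono hm

lemma dir_closure (n : ℕ) : Directed (· ≤ ·) fun S : Finset G =>
    (derivedSeries ↥(Subgroup.closure (S : Set G)) n).map (Subgroup.closure (S : Set G)).subtype := by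
  classical
  exact fun S T => ⟨S ∪ T, map_mono_closure Finset.subset_union_left n,
    map_mono_closure Finset.subset_union_right n⟩

lemma derivedSeries_le_iSup (n : ℕ) :
    derivedSeries G n ≤ ⨆ S : Finset G,
      (derivedSeries ↥(Subgroup.closure (S : Set G)) n).map (Subgroup.closure (S : Set G)).subtype := by
  induction n with
  | zero =>
    intro g _
    rw [Subgroup.mem_iSup_of_directed (dir_closure 0)]
    refine ⟨{g}, ?_⟩
    have hg : g ∈ Subgroup.closure (({g} : Finset G) : Set G) := Subgroup.subset_closure (by simp)
    exact ⟨⟨g, hg⟩, Subgroup.mem_top _, rfl⟩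
  | succ n ih =>
    rw [derivedSeries_succ, Subgroup.commutator_le]
    intro g₁ hg₁ g₂ hg₂
    classical
    obtain ⟨S, hS⟩ := (Subgroup.mem_iSup_of_directed (dir_closure n)).mp (ih hg₁)
    obtain ⟨T, hT⟩ := (Subgroup.mem_iSup_of_directed (dir_closure n)).mp (ih hg₂)
    rw [Subgroup.mem_iSup_of_directed (dir_closure (n+1))]
    refine ⟨S ∪ T, ?_⟩
    have h1 := map_mono_closure (Finset.subset_union_left (s₁ := S) (s₂ := T)) n hS
    have h2 := map_mono_closure (Finset.subset_union_right (s₁ := S) (s₂ := T)) n hT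
    obtain ⟨a, ha, rfl⟩ := h1
    obtain ⟨b, hb, rfl⟩ := h2
    refine ⟨a * b * a⁻¹ * b⁻¹, Subgroup.commutator_mem_commutator ha hb, rfl⟩

lemma exists_finset_derived (hH : ¬ IsSolvable G) (n : ℕ) :
    ∃ (S : Finset G) (g : ↥(Subgroup.closure (S : Set G))),
      g ∈ derivedSeries ↥(Subgroup.closure (S : Set G)) n ∧ g ≠ 1 := by
  have hne : derivedSeries G n ≠ ⊥ := fun h => hH ⟨n, h⟩
  obtain ⟨⟨g, hg⟩, hg1⟩ := Subgroup.ne_bot_iff_exists_ne_one.mp hne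
  obtain ⟨S, g', hg', hgg⟩ := (Subgroup.mem_iSup_of_directed (dir_closure n)).mp
    (derivedSeries_le_iSup n hg)
  refine ⟨S, g', hg', fun h => ?_⟩
  apply hg1
  have : ((g' : Subgroup.closure (S : Set G)) : G) = g := hgg
  rw [h] at this
  exact Subtype.ext (by simpa using this.symm)

end Aux

variable (X H : Type*)

/-- `H(X)`: the direct sum of copies of `H` indexed by `X`, realized as the subgroup of
the product group `X → H` consisting of finitely supported functions. -/
def FinSupp [Group H] : Subgroup (X → H) where
  carrier := {f | (Function.mulSupport f).Finite}
  one_mem' := by simp [Function.mulSupport_one]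
  mul_mem' {f g} hf hg := (hf.union hg).subset (Function.mulSupport_mul f g)
  inv_mem' {f} hf := by simpa [Function.mulSupport_inv] using hf


/-- The embedding of `H` as the `x`-th coordinate subgroup of `FinSupp X H`. -/
def emb [Group H] [DecidableEq X] (x : X) : H →* ↥(FinSupp X H) :=
  (MonoidHom.mulSingle (fun _ : X => H) x).codRestrict (FinSupp X H)
    (fun h => (Set.finite_singleton x).subset Pi.mulSupport_mulSingle_subset)

/-- Let `X` be an uncountable set and `H` a group that is not solvable.
Then every subgroup of countable index in `⊕_{x ∈ X} H` is not solvable; in particular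
`⊕_{x ∈ X} H` is not solvable-by-countable: it has no solvable subgroup of countable
index. -/
theorem statement8 [Uncountable X] [Group H] (hH : ¬ IsSolvable H) :
    (∀ A : Subgroup ↥(FinSupp X H), Countable (↥(FinSupp X H) ⧸ A) → ¬ IsSolvable ↥A) ∧
    ¬ ∃ A : Subgroup ↥(FinSupp X H), Countable (↥(FinSupp X H) ⧸ A) ∧ IsSolvable ↥A := by

  letI := Classical.decEq X
  have main : ∀ A : Subgroup ↥(FinSupp X H), Countable (↥(FinSupp X H) ⧸ A) → ¬ IsSolvable ↥A := by
    intro A hc hsolv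
    obtain ⟨m, hm⟩ := hsolv
    obtain ⟨S, g', hg', hg1⟩ := exists_finset_derived hH m
    -- pigeonhole: two distinct indices with equal coset tuples
    set Φ : X → (↥S → ↥(FinSupp X H) ⧸ A) :=
      fun x s => QuotientGroup.mk (emb X H x (s : H)) with hΦ
    have hninj : ¬ Function.Injective Φ := fun hinj => not_countable (α := X) hinj.countable
    rw [Function.Injective] at hninj
    push_neg at hninj
    obtain ⟨x, y, hxy, hne⟩ := hninj
    -- the elements c_s ∈ A
    have hc_mem : ∀ s : H, s ∈ S → (emb X H x s)⁻¹ * emb X H y s ∈ A := by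
      intro s hs
      have := congrFun hxy ⟨s, hs⟩
      exact QuotientGroup.eq.mp this
    -- evaluation at y
    set q : ↥(FinSupp X H) →* H :=
      (Pi.evalMonoidHom (fun _ : X => H) y).comp (FinSupp X H).subtype with hqdef
    have hq_emb_x : ∀ s : H, q (emb X H x s) = 1 := by
      intro s
      show Pi.mulSingle (M := fun _ : X => H) x s y = 1
      exact Pi.mulSingle_eq_of_ne (M := fun _ : X => H) (Ne.symm hne) s
    have hq_emb_y : ∀ s : H, q (emb X H y s) = s := by
      intro s
      show Pi.mulSingle (M := fun _ : X => H) y s y = s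
      exact Pi.mulSingle_eq_same (M := fun _ : X => H) y s
    set T : Set ↥(FinSupp X H) :=
      (fun s : H => (emb X H x s)⁻¹ * emb X H y s) '' (S : Set H) with hTdef
    set C : Subgroup ↥(FinSupp X H) := Subgroup.closure T with hCdef
    have hCA : C ≤ A := by
      rw [hCdef, Subgroup.closure_le]
      rintro _ ⟨s, hs, rfl⟩
      exact hc_mem s hs
    -- map q C = closure S
    have hmapC : Subgroup.map q C = Subgroup.closure (S : Set H) := by
      rw [hCdef, MonoidHom.map_closure]
      congr 1
      rw [hTdef, Set.image_image]
      have : ∀ s ∈ (S : Set H), q ((emb X H x s)⁻¹ * emb X H y s) = id s := by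
        intro s _
        rw [map_mul, map_inv, hq_emb_x, hq_emb_y, inv_one, one_mul, id]
      rw [Set.image_congr this, Set.image_id]
    -- derived series of C dies at m
    have hCbot : derivedSeries ↥C m = ⊥ := by
      rw [Subgroup.eq_bot_iff_forall]
      intro c hcm
      have : Subgroup.inclusion hCA c ∈ Subgroup.map (Subgroup.inclusion hCA) (derivedSeries ↥C m) :=
        Subgroup.mem_map_of_mem _ hcm
      have hle := map_derivedSeries_le_derivedSeries (Subgroup.inclusion hCA) m this
      rw [hm, Subgroup.mem_bot] at hle
      exact Subgroup.inclusion_injective hCA (hle.trans (map_one _).symm)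
    have hmapbot : derivedSeries ↥(Subgroup.map q C) m = ⊥ := by
      rw [← map_derivedSeries_eq (q.subgroupMap_surjective C) m, hCbot]
      simp
    rw [hmapC] at hmapbot
    rw [hmapbot, Subgroup.mem_bot] at hg'
    exact hg1 hg'
  exact ⟨main, fun ⟨A, hc, hsolv⟩ => main A hc hsolv⟩
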